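/- If h : V → ℝ is harmonic on a connected open set V ⊆ ℂ containing [0,1], with |h| ≤ 1 on V and |h(0)| ≤ a for some fixed a < 1, then there exists λ with 0 < λ < 1, depending only on V and a (not on h), such that |h(1)| ≤ λ. -/

import Mathlib

/-- A real-valued function on an open subset of `ℂ` is harmonic if it is `C²` there and
its Laplacian `∂²h/∂x² + ∂²h/∂y²` vanishes. -/
def HarmonicOnSet (h : ℂ → ℝ) (V : Set ℂ) : Prop :=
  ContDiffOn ℝ 2 h V ∧ ∀ z ∈ V,
    fderiv ℝ (fun w => fderiv ℝ h w 1) z 1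
      + fderiv ℝ (fun w => fderiv ℝ h w Complex.I) z Complex.I = 0

open Complex Metric Set MeasureTheory intervalIntegral


/-- Cauchy-Riemann: a real-differentiable map whose differential is `ℂ`-linear is
complex-differentiable. -/
lemma hasDerivAt_of_cr {f : ℂ → ℂ} {L : ℂ →L[ℝ] ℂ} {z : ℂ}
    (hf : HasFDerivAt f L z) (hCR : L Complex.I = Complex.I * L 1) :
    HasDerivAt f (L 1) z := by
  have hL : ∀ w : ℂ, L w = w * L 1 := by
    intro w
    have hw : w = w.re • (1 : ℂ) + w.im • Complex.I := by
      simp [Complex.real_smul, Complex.re_add_im]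
    calc L w = L (w.re • (1 : ℂ) + w.im • Complex.I) := by rw [← hw]
    _ = w.re • L 1 + w.im • L Complex.I := by
        rw [map_add, _root_.map_smul, _root_.map_smul]
    _ = w * L 1 := by
        rw [hCR]
        simp only [Complex.real_smul]
        nth_rewrite 3 [← Complex.re_add_im w]
        ring
  have key : HasFDerivAt f
      ((ContinuousLinearMap.smulRight (1 : ℂ →L[ℂ] ℂ) (L 1)).restrictScalars ℝ) z := by
    convert hf using 1
    ext w
    simp [hL w, smul_eq_mul]
  have : HasFDerivAt f (ContinuousLinearMap.smulRight (1 : ℂ →L[ℂ] ℂ) (L 1)) z :=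
    hasFDerivAt_of_restrictScalars ℝ key rfl
  simpa using this.hasDerivAt

/-- membership helper for intervals inside an open square side. -/
lemma uIcc_abs_lt {a b c s r : ℝ} (hs : s ∈ Set.uIcc a b) (haa : |a - c| < r)
    (hbb : |b - c| < r) : |s - c| < r := by
  rcases le_total a b with hab | hab
  · rw [Set.uIcc_of_le hab] at hs
    rw [abs_sub_lt_iff] at *
    exact ⟨by linarith [hs.2], by linarith [hs.1]⟩
  · rw [Set.uIcc_of_ge hab] at hs
    rw [abs_sub_lt_iff] at *
    exact ⟨by linarith [hs.2], by linarith [hs.1]⟩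

lemma uIoc_abs_le {a b s : ℝ} (hs : s ∈ Set.uIoc a b) : |s - a| ≤ |b - a| := by
  rcases le_total a b with hab | hab
  · rw [Set.uIoc_of_le hab] at hs
    rw [abs_sub_le_iff, _root_.abs_of_nonneg (by linarith : (0:ℝ) ≤ b - a)]
    exact ⟨by linarith [hs.1, hs.2], by linarith [hs.1, hs.2]⟩
  · rw [Set.uIoc_of_ge hab] at hs
    rw [abs_sub_le_iff, _root_.abs_of_nonpos (by linarith : b - a ≤ (0:ℝ)), neg_sub]
    exact ⟨by linarith [hs.1, hs.2], by linarith [hs.1, hs.2]⟩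

/-- Fubini for iterated interval integrals of a continuous function. -/
lemma interval_integral_swap {g : ℝ → ℝ → ℝ} {a b c d : ℝ}
    (hg : ContinuousOn (fun q : ℝ × ℝ => g q.1 q.2) (Set.uIcc a b ×ˢ Set.uIcc c d)) :
    ∫ s in a..b, ∫ t in c..d, g s t = ∫ t in c..d, ∫ s in a..b, g s t := by
  have hint : Integrable (Function.uncurry g)
      ((volume.restrict (Set.uIoc a b)).prod (volume.restrict (Set.uIoc c d))) := by
    rw [MeasureTheory.Measure.prod_restrict]
    exact (hg.integrableOn_compact (isCompact_uIcc.prod isCompact_uIcc)).mono_set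
      (Set.prod_mono Set.uIoc_subset_uIcc Set.uIoc_subset_uIcc)
  have swap := MeasureTheory.integral_integral_swap (μ := volume.restrict (Set.uIoc a b))
    (ν := volume.restrict (Set.uIoc c d)) (f := g) hint
  simp only [intervalIntegral_eq_integral_uIoc]
  rw [MeasureTheory.integral_smul, MeasureTheory.integral_smul, swap, smul_comm]

lemma hasDerivAt_mkx (t x : ℝ) : HasDerivAt (fun s : ℝ => Complex.mk s t) 1 x := by
  have : (fun s : ℝ => Complex.mk s t) = fun s : ℝ => (s : ℂ) + (t : ℂ) * Complex.I := by
    funext s; rw [Complex.mk_eq_add_mul_I]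
  rw [this]
  simpa using (Complex.ofRealCLM.hasDerivAt (x := x)).add_const ((t : ℂ) * Complex.I)

lemma hasDerivAt_mky (x t : ℝ) : HasDerivAt (fun s : ℝ => Complex.mk x s) Complex.I t := by
  have : (fun s : ℝ => Complex.mk x s) = fun s : ℝ => (s : ℂ) * Complex.I + (x:ℂ) := by
    funext s; rw [Complex.mk_eq_add_mul_I]; ring
  rw [this]
  simpa using ((Complex.ofRealCLM.hasDerivAt (x := t)).mul_const Complex.I).add_const (x:ℂ)

lemma hderiv_x (g : ℂ → ℝ) (x t : ℝ) (hg : DifferentiableAt ℝ g (Complex.mk x t)) :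
    HasDerivAt (fun s : ℝ => g (Complex.mk s t)) (fderiv ℝ g (Complex.mk x t) 1) x := by
  exact (hg.hasFDerivAt.comp_hasDerivAt x (hasDerivAt_mkx t x))

lemma hderiv_y (g : ℂ → ℝ) (x t : ℝ) (hg : DifferentiableAt ℝ g (Complex.mk x t)) :
    HasDerivAt (fun s : ℝ => g (Complex.mk x s)) (fderiv ℝ g (Complex.mk x t) Complex.I) t := by
  exact (hg.hasFDerivAt.comp_hasDerivAt t (hasDerivAt_mky x t))


noncomputable def px (h : ℂ → ℝ) (z : ℂ) : ℝ := fderiv ℝ h z 1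
noncomputable def py (h : ℂ → ℝ) (z : ℂ) : ℝ := fderiv ℝ h z Complex.I

lemma laplace_eq {h : ℂ → ℝ} {V : Set ℂ} (hh : HarmonicOnSet h V) {z : ℂ} (hz : z ∈ V) :
    px (px h) z + py (py h) z = 0 := hh.2 z hz

section reg
variable {h : ℂ → ℝ} {V : Set ℂ}

lemma diffAt_of_c2 (hV : IsOpen V) (hc : ContDiffOn ℝ 2 h V) {z : ℂ} (hz : z ∈ V) :
    DifferentiableAt ℝ h z :=
  ((hc.differentiableOn (by norm_num)).differentiableAt (hV.mem_nhds hz))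

lemma cd1_px (hV : IsOpen V) (hc : ContDiffOn ℝ 2 h V) : ContDiffOn ℝ 1 (px h) V :=
  (ContinuousLinearMap.apply ℝ ℝ (1:ℂ)).contDiff.comp_contDiffOn
    (hc.fderiv_of_isOpen hV (by norm_num))

lemma cd1_py (hV : IsOpen V) (hc : ContDiffOn ℝ 2 h V) : ContDiffOn ℝ 1 (py h) V :=
  (ContinuousLinearMap.apply ℝ ℝ (Complex.I)).contDiff.comp_contDiffOn
    (hc.fderiv_of_isOpen hV (by norm_num))

lemma cont_px (hV : IsOpen V) (hc : ContDiffOn ℝ 2 h V) : ContinuousOn (px h) V :=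
  (cd1_px hV hc).continuousOn

lemma cont_py (hV : IsOpen V) (hc : ContDiffOn ℝ 2 h V) : ContinuousOn (py h) V :=
  (cd1_py hV hc).continuousOn

lemma diffAt_px (hV : IsOpen V) (hc : ContDiffOn ℝ 2 h V) {z : ℂ} (hz : z ∈ V) :
    DifferentiableAt ℝ (px h) z :=
  (((cd1_px hV hc).differentiableOn one_ne_zero).differentiableAt (hV.mem_nhds hz))

lemma diffAt_py (hV : IsOpen V) (hc : ContDiffOn ℝ 2 h V) {z : ℂ} (hz : z ∈ V) :
    DifferentiableAt ℝ (py h) z :=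
  (((cd1_py hV hc).differentiableOn one_ne_zero).differentiableAt (hV.mem_nhds hz))

lemma cont_pxpx (hV : IsOpen V) (hc : ContDiffOn ℝ 2 h V) : ContinuousOn (px (px h)) V :=
  (ContinuousLinearMap.apply ℝ ℝ (1:ℂ)).continuous.comp_continuousOn
    ((cd1_px hV hc).continuousOn_fderiv_of_isOpen hV le_rfl)

end reg

lemma continuous_mky (X : ℝ) : Continuous fun t : ℝ => Complex.mk X t := by
  have : (fun t : ℝ => Complex.mk X t) = fun t : ℝ => (X:ℂ) + (t:ℂ) * Complex.I := by
    funext s; rw [Complex.mk_eq_add_mul_I]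
  rw [this]; fun_prop

lemma continuous_mkx (Y : ℝ) : Continuous fun s : ℝ => Complex.mk s Y := by
  have : (fun s : ℝ => Complex.mk s Y) = fun s : ℝ => (s:ℂ) + (Y:ℂ) * Complex.I := by
    funext s; rw [Complex.mk_eq_add_mul_I]
  rw [this]; fun_prop

section incr
variable {h : ℂ → ℝ} {V : Set ℂ} {p : ℂ} {r : ℝ}

-- integrability helpers
lemma intInt_px (hV : IsOpen V) (hc : ContDiffOn ℝ 2 h V)
    (hsq : ∀ z : ℂ, |z.re - p.re| < r → |z.im - p.im| < r → z ∈ V)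
    {X t₁ t₂ : ℝ} (hX : |X - p.re| < r) (h1 : |t₁ - p.im| < r) (h2 : |t₂ - p.im| < r) :
    IntervalIntegrable (fun t => px h (Complex.mk X t)) volume t₁ t₂ := by
  apply ContinuousOn.intervalIntegrable
  apply (cont_px hV hc).comp (continuous_mky X).continuousOn
  intro t ht
  exact hsq _ (by simpa using hX) (by simpa using uIcc_abs_lt ht h1 h2)

lemma intInt_py (hV : IsOpen V) (hc : ContDiffOn ℝ 2 h V)
    (hsq : ∀ z : ℂ, |z.re - p.re| < r → |z.im - p.im| < r → z ∈ V)
    {Y s₁ s₂ : ℝ} (hY : |Y - p.im| < r) (h1 : |s₁ - p.re| < r) (h2 : |s₂ - p.re| < r) :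
    IntervalIntegrable (fun s => py h (Complex.mk s Y)) volume s₁ s₂ := by
  apply ContinuousOn.intervalIntegrable
  apply (cont_py hV hc).comp (continuous_mkx Y).continuousOn
  intro s hs
  exact hsq _ (by simpa using uIcc_abs_lt hs h1 h2) (by simpa using hY)

lemma intInt_pxpx (hV : IsOpen V) (hc : ContDiffOn ℝ 2 h V)
    (hsq : ∀ z : ℂ, |z.re - p.re| < r → |z.im - p.im| < r → z ∈ V)
    {t s₁ s₂ : ℝ} (ht : |t - p.im| < r) (h1 : |s₁ - p.re| < r) (h2 : |s₂ - p.re| < r) :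
    IntervalIntegrable (fun s => px (px h) (Complex.mk s t)) volume s₁ s₂ := by
  apply ContinuousOn.intervalIntegrable
  apply (cont_pxpx hV hc).comp (continuous_mkx t).continuousOn
  intro s hs
  exact hsq _ (by simpa using uIcc_abs_lt hs h1 h2) (by simpa using ht)

end incr
section main
variable {h : ℂ → ℝ} {V : Set ℂ} {p : ℂ} {r : ℝ}

lemma intInt_pxpx_vert (hV : IsOpen V) (hc : ContDiffOn ℝ 2 h V)
    (hsq : ∀ z : ℂ, |z.re - p.re| < r → |z.im - p.im| < r → z ∈ V)
    {X t₁ t₂ : ℝ} (hX : |X - p.re| < r) (h1 : |t₁ - p.im| < r) (h2 : |t₂ - p.im| < r) :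
    IntervalIntegrable (fun t => px (px h) (Complex.mk X t)) volume t₁ t₂ := by
  apply ContinuousOn.intervalIntegrable
  apply (cont_pxpx hV hc).comp (continuous_mky X).continuousOn
  intro t ht
  exact hsq _ (by simpa using hX) (by simpa using uIcc_abs_lt ht h1 h2)

lemma incr_eq (hV : IsOpen V) (hr : 0 < r) (hh : HarmonicOnSet h V)
    (hsq : ∀ z : ℂ, |z.re - p.re| < r → |z.im - p.im| < r → z ∈ V)
    {x y x' y' : ℝ} (hx1 : |x - p.re| < r) (hy1 : |y - p.im| < r)
    (hx2 : |x' - p.re| < r) (hy2 : |y' - p.im| < r) :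
    ((∫ t in p.im..y', px h (Complex.mk x' t)) - ∫ s in p.re..x', py h (Complex.mk s p.im))
      - ((∫ t in p.im..y, px h (Complex.mk x t)) - ∫ s in p.re..x, py h (Complex.mk s p.im))
    = (∫ t in y..y', px h (Complex.mk x' t)) - ∫ s in x..x', py h (Complex.mk s y) := by
  have hc := hh.1
  have hp0 : |p.re - p.re| < r := by simpa using hr
  have hp0' : |p.im - p.im| < r := by simpa using hr
  have e1 : (∫ t in p.im..y, px h (Complex.mk x' t)) + (∫ t in y..y', px h (Complex.mk x' t))
      = ∫ t in p.im..y', px h (Complex.mk x' t) :=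
    intervalIntegral.integral_add_adjacent_intervals
      (intInt_px hV hc hsq hx2 hp0' hy1) (intInt_px hV hc hsq hx2 hy1 hy2)
  have e2 : (∫ s in p.re..x, py h (Complex.mk s p.im)) + (∫ s in x..x', py h (Complex.mk s p.im))
      = ∫ s in p.re..x', py h (Complex.mk s p.im) :=
    intervalIntegral.integral_add_adjacent_intervals
      (intInt_py hV hc hsq hp0' hp0 hx1) (intInt_py hV hc hsq hp0' hx1 hx2)
  have key : (∫ t in p.im..y, px h (Complex.mk x' t)) - (∫ t in p.im..y, px h (Complex.mk x t))
      = (∫ s in x..x', py h (Complex.mk s p.im)) - ∫ s in x..x', py h (Complex.mk s y) := by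
    rw [← intervalIntegral.integral_sub (intInt_px hV hc hsq hx2 hp0' hy1)
        (intInt_px hV hc hsq hx1 hp0' hy1),
      ← intervalIntegral.integral_sub (intInt_py hV hc hsq hp0' hx1 hx2)
        (intInt_py hV hc hsq hy1 hx1 hx2)]
    have step1 : Set.EqOn (fun t => px h (Complex.mk x' t) - px h (Complex.mk x t))
        (fun t => ∫ s in x..x', px (px h) (Complex.mk s t)) (Set.uIcc p.im y) := by
      intro t ht
      have htr : |t - p.im| < r := uIcc_abs_lt ht hp0' hy1
      simp only
      rw [intervalIntegral.integral_eq_sub_of_hasDerivAt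
        (f := fun s => px h (Complex.mk s t)) ?_ (intInt_pxpx hV hc hsq htr hx1 hx2)]
      · intro s hs
        exact hderiv_x (px h) s t (diffAt_px hV hc
          (hsq _ (by simpa using uIcc_abs_lt hs hx1 hx2) (by simpa using htr)))
    rw [intervalIntegral.integral_congr step1,
      interval_integral_swap (g := fun t s => px (px h) (Complex.mk s t)) ?hcont]
    case hcont =>
      have hcmk : Continuous (fun q : ℝ × ℝ => Complex.mk q.2 q.1) := by
        have : (fun q : ℝ × ℝ => Complex.mk q.2 q.1)
            = fun q : ℝ × ℝ => (q.2 : ℂ) + (q.1 : ℂ) * Complex.I := by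
          funext q; rw [Complex.mk_eq_add_mul_I]
        rw [this]; fun_prop
      apply (cont_pxpx hV hc).comp hcmk.continuousOn
      rintro ⟨t, s⟩ ⟨ht, hs⟩
      exact hsq _ (by simpa using uIcc_abs_lt hs hx1 hx2)
        (by simpa using uIcc_abs_lt ht hp0' hy1)
    apply intervalIntegral.integral_congr
    intro s hs
    have hsr : |s - p.re| < r := uIcc_abs_lt hs hx1 hx2
    simp only
    have hD : ∀ t ∈ Set.uIcc p.im y,
        HasDerivAt (fun t => -(py h (Complex.mk s t))) (px (px h) (Complex.mk s t)) t := by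
      intro t ht
      have htr : |t - p.im| < r := uIcc_abs_lt ht hp0' hy1
      have hmem : Complex.mk s t ∈ V := hsq _ (by simpa using hsr) (by simpa using htr)
      have : HasDerivAt (fun t => -(py h (Complex.mk s t)))
          (-(fderiv ℝ (py h) (Complex.mk s t) Complex.I)) t :=
        (hderiv_y (py h) s t (diffAt_py hV hc hmem)).fun_neg
      have hlap := laplace_eq hh hmem
      convert this using 1
      have : py (py h) (Complex.mk s t) = fderiv ℝ (py h) (Complex.mk s t) Complex.I := rfl
      linarith
    rw [intervalIntegral.integral_eq_sub_of_hasDerivAt hD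
      (intInt_pxpx_vert hV hc hsq hsr hp0' hy1)]
    ring
  linarith
end main

section main2
variable {h : ℂ → ℝ} {V : Set ℂ} {p : ℂ} {r : ℝ}

lemma exists_holo (hV : IsOpen V) (hr : 0 < r) (hh : HarmonicOnSet h V)
    (hsq : ∀ z : ℂ, |z.re - p.re| < r → |z.im - p.im| < r → z ∈ V) :
    ∃ F : ℂ → ℂ, DifferentiableOn ℂ F (Metric.ball p r) ∧
      ∀ z ∈ Metric.ball p r, (F z).re = h z := by
  have hc := hh.1
  set k : ℂ → ℝ := fun z =>
    (∫ t in p.im..z.im, px h (Complex.mk z.re t))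
      - ∫ s in p.re..z.re, py h (Complex.mk s p.im) with hkdef
  refine ⟨fun z => (h z : ℂ) + (k z : ℂ) * Complex.I, ?_, by intro z hz; simp⟩
  intro z hz
  -- coordinates of z
  have hzx : |z.re - p.re| < r := by
    have := Complex.abs_re_le_norm (z - p)
    rw [Complex.sub_re] at this
    exact lt_of_le_of_lt this (by rwa [Metric.mem_ball, Complex.dist_eq] at hz)
  have hzy : |z.im - p.im| < r := by
    have := Complex.abs_im_le_norm (z - p)
    rw [Complex.sub_im] at this
    exact lt_of_le_of_lt this (by rwa [Metric.mem_ball, Complex.dist_eq] at hz)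
  have hzV : z ∈ V := hsq z hzx hzy
  -- the real Fréchet derivative of k
  set L : ℂ →L[ℝ] ℝ := (px h z) • Complex.imCLM - (py h z) • Complex.reCLM with hLdef
  have hLapp : ∀ w : ℂ, L w = px h z * w.im - py h z * w.re := by
    intro w
    simp [hLdef, ContinuousLinearMap.sub_apply, ContinuousLinearMap.smul_apply, smul_eq_mul]
  have hk : HasFDerivAt k L z := by
    rw [hasFDerivAt_iff_isLittleO_nhds_zero, Asymptotics.isLittleO_iff]
    intro c hc'
    have hpxc := Metric.continuousAt_iff.1 ((cont_px hV hc).continuousAt (hV.mem_nhds hzV))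
      (c/2) (by positivity)
    obtain ⟨δ₁, hδ₁, hδ₁'⟩ := hpxc
    have hpyc := Metric.continuousAt_iff.1 ((cont_py hV hc).continuousAt (hV.mem_nhds hzV))
      (c/2) (by positivity)
    obtain ⟨δ₂, hδ₂, hδ₂'⟩ := hpyc
    set m : ℝ := min (r - |z.re - p.re|) (r - |z.im - p.im|) with hmdef
    have hm : 0 < m := by
      apply lt_min <;> linarith
    set δ : ℝ := min (min (δ₁/2) (δ₂/2)) (m/2) with hδdef
    have hδ : 0 < δ := by
      apply lt_min (lt_min (by linarith) (by linarith)) (by linarith)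
    filter_upwards [Metric.ball_mem_nhds (0:ℂ) hδ] with w hw
    rw [Metric.mem_ball, dist_zero_right] at hw
    have hwre : |w.re| ≤ ‖w‖ := by
      simpa using Complex.abs_re_le_norm w
    have hwim : |w.im| ≤ ‖w‖ := by
      simpa using Complex.abs_im_le_norm w
    -- coordinates of z + w are in the square
    have hx2 : |z.re + w.re - p.re| < r := by
      have : |z.re + w.re - p.re| ≤ |z.re - p.re| + |w.re| := by
        have := abs_add_le (z.re - p.re) w.re; rw [show z.re - p.re + w.re = z.re + w.re - p.re by ring] at this; exact this
      have hwm : ‖w‖ < m/2 := lt_of_lt_of_le hw (min_le_right _ _)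
      have : |z.re + w.re - p.re| ≤ |z.re - p.re| + ‖w‖ := le_trans this (by linarith)
      have hm1 : m ≤ r - |z.re - p.re| := min_le_left _ _
      linarith
    have hy2 : |z.im + w.im - p.im| < r := by
      have h1 : |z.im + w.im - p.im| ≤ |z.im - p.im| + |w.im| := by
        have := abs_add_le (z.im - p.im) w.im; rw [show z.im - p.im + w.im = z.im + w.im - p.im by ring] at this; exact this
      have hwm : ‖w‖ < m/2 := lt_of_lt_of_le hw (min_le_right _ _)
      have hm1 : m ≤ r - |z.im - p.im| := min_le_right _ _
      linarith
    -- increment identity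
    have hid := incr_eq hV hr hh hsq hzx hzy hx2 hy2
    have hkid : k (z + w) - k z = (∫ t in z.im..(z.im + w.im), px h (Complex.mk (z.re + w.re) t))
        - ∫ s in z.re..(z.re + w.re), py h (Complex.mk s z.im) := by
      simpa [hkdef, Complex.add_re, Complex.add_im] using hid
    -- pointwise bounds on the paths
    have hb1 : ∀ t ∈ Set.uIoc z.im (z.im + w.im),
        ‖px h (Complex.mk (z.re + w.re) t) - px h z‖ ≤ c/2 := by
      intro t ht
      have htb : |t - z.im| ≤ |w.im| := by
        have := uIoc_abs_le ht; rwa [show z.im + w.im - z.im = w.im by ring] at this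
      have hdist : dist (Complex.mk (z.re + w.re) t) z < δ₁ := by
        rw [Complex.dist_eq]
        calc ‖Complex.mk (z.re + w.re) t - z‖
            ≤ |(Complex.mk (z.re + w.re) t - z).re| + |(Complex.mk (z.re + w.re) t - z).im| :=
              Complex.norm_le_abs_re_add_abs_im _
          _ = |w.re| + |t - z.im| := by simp [Complex.sub_re, Complex.sub_im]
          _ ≤ ‖w‖ + ‖w‖ := add_le_add hwre (le_trans htb hwim)
          _ < δ₁ := by
              have : ‖w‖ < δ₁/2 := lt_of_lt_of_le hw ((min_le_left _ _).trans (min_le_left _ _))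
              linarith
      exact le_of_lt (by simpa [Real.dist_eq] using hδ₁' hdist)
    have hb2 : ∀ s ∈ Set.uIoc z.re (z.re + w.re),
        ‖py h (Complex.mk s z.im) - py h z‖ ≤ c/2 := by
      intro s hs
      have hsb : |s - z.re| ≤ |w.re| := by
        have := uIoc_abs_le hs; rwa [show z.re + w.re - z.re = w.re by ring] at this
      have hdist : dist (Complex.mk s z.im) z < δ₂ := by
        rw [Complex.dist_eq]
        calc ‖Complex.mk s z.im - z‖
            ≤ |(Complex.mk s z.im - z).re| + |(Complex.mk s z.im - z).im| :=
              Complex.norm_le_abs_re_add_abs_im _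
          _ = |s - z.re| + 0 := by simp [Complex.sub_re, Complex.sub_im]
          _ ≤ ‖w‖ + ‖w‖ := by
              have := le_trans hsb hwre
              have h0 : (0:ℝ) ≤ ‖w‖ := norm_nonneg w
              linarith
          _ < δ₂ := by
              have : ‖w‖ < δ₂/2 := lt_of_lt_of_le hw ((min_le_left _ _).trans (min_le_right _ _))
              linarith
      exact le_of_lt (by simpa [Real.dist_eq] using hδ₂' hdist)
    -- integrability on the two small paths
    have hi1 : IntervalIntegrable (fun t => px h (Complex.mk (z.re + w.re) t)) volume
        z.im (z.im + w.im) := intInt_px hV hc hsq hx2 hzy hy2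
    have hi2 : IntervalIntegrable (fun s => py h (Complex.mk s z.im)) volume
        z.re (z.re + w.re) := intInt_py hV hc hsq hzy hzx hx2
    -- rewrite the linear part as integrals of constants
    have e1 : (∫ t in z.im..(z.im + w.im), px h (Complex.mk (z.re + w.re) t)) - w.im * px h z
        = ∫ t in z.im..(z.im + w.im), (px h (Complex.mk (z.re + w.re) t) - px h z) := by
      rw [intervalIntegral.integral_sub hi1 intervalIntegrable_const,
        intervalIntegral.integral_const]
      simp [smul_eq_mul]
    have e2 : (∫ s in z.re..(z.re + w.re), py h (Complex.mk s z.im)) - w.re * py h z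
        = ∫ s in z.re..(z.re + w.re), (py h (Complex.mk s z.im) - py h z) := by
      rw [intervalIntegral.integral_sub hi2 intervalIntegrable_const,
        intervalIntegral.integral_const]
      simp [smul_eq_mul]
    have n1 : ‖∫ t in z.im..(z.im + w.im), (px h (Complex.mk (z.re + w.re) t) - px h z)‖
        ≤ c/2 * |z.im + w.im - z.im| :=
      intervalIntegral.norm_integral_le_of_norm_le_const hb1
    have n2 : ‖∫ s in z.re..(z.re + w.re), (py h (Complex.mk s z.im) - py h z)‖
        ≤ c/2 * |z.re + w.re - z.re| :=
      intervalIntegral.norm_integral_le_of_norm_le_const hb2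
    rw [show z.im + w.im - z.im = w.im by ring] at n1
    rw [show z.re + w.re - z.re = w.re by ring] at n2
    have : k (z + w) - k z - L w
        = (∫ t in z.im..(z.im + w.im), (px h (Complex.mk (z.re + w.re) t) - px h z))
          - ∫ s in z.re..(z.re + w.re), (py h (Complex.mk s z.im) - py h z) := by
      rw [← e1, ← e2, hLapp w]
      linarith [hkid]
    rw [this]
    calc ‖(∫ t in z.im..(z.im + w.im), (px h (Complex.mk (z.re + w.re) t) - px h z))
          - ∫ s in z.re..(z.re + w.re), (py h (Complex.mk s z.im) - py h z)‖
        ≤ ‖∫ t in z.im..(z.im + w.im), (px h (Complex.mk (z.re + w.re) t) - px h z)‖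
          + ‖∫ s in z.re..(z.re + w.re), (py h (Complex.mk s z.im) - py h z)‖ := norm_sub_le _ _
      _ ≤ c/2 * |w.im| + c/2 * |w.re| := add_le_add n1 n2
      _ ≤ c/2 * ‖w‖ + c/2 * ‖w‖ := by
          have := mul_le_mul_of_nonneg_left hwim (by positivity : (0:ℝ) ≤ c/2)
          have := mul_le_mul_of_nonneg_left hwre (by positivity : (0:ℝ) ≤ c/2)
          linarith
      _ = c * ‖w‖ := by ring
  -- assemble F and check Cauchy-Riemann
  have hhd : HasFDerivAt h (fderiv ℝ h z) z := (diffAt_of_c2 hV hc hzV).hasFDerivAt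
  have hF1 : HasFDerivAt (fun z => ((h z : ℝ) : ℂ)) (Complex.ofRealCLM.comp (fderiv ℝ h z)) z :=
    Complex.ofRealCLM.hasFDerivAt.comp z hhd
  have hF2 : HasFDerivAt (fun z => ((k z : ℝ) : ℂ)) (Complex.ofRealCLM.comp L) z :=
    Complex.ofRealCLM.hasFDerivAt.comp z hk
  have hF3 := hF2.mul_const Complex.I
  have hF : HasFDerivAt (fun z => (h z : ℂ) + (k z : ℂ) * Complex.I)
      (Complex.ofRealCLM.comp (fderiv ℝ h z)
        + Complex.I • Complex.ofRealCLM.comp L) z := hF1.add hF3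
  have hCR : (Complex.ofRealCLM.comp (fderiv ℝ h z)
        + Complex.I • Complex.ofRealCLM.comp L) Complex.I
      = Complex.I * (Complex.ofRealCLM.comp (fderiv ℝ h z)
        + Complex.I • Complex.ofRealCLM.comp L) 1 := by
    have hfx : fderiv ℝ h z 1 = px h z := rfl
    have hfy : fderiv ℝ h z Complex.I = py h z := rfl
    simp only [ContinuousLinearMap.add_apply, ContinuousLinearMap.coe_comp', Function.comp_apply,
      ContinuousLinearMap.smul_apply, hLapp, hfx, hfy]
    simp [Complex.ext_iff]
  exact ((hasDerivAt_of_cr hF hCR).differentiableAt).differentiableWithinAt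
end main2

/-- Harnack inequality on a ball, via the Schwarz lemma, strict-positivity version. -/
lemma harnack_ball_pos {F : ℂ → ℂ} {c : ℂ} {R : ℝ}
    (hd : DifferentiableOn ℂ F (Metric.ball c R))
    (hpos : ∀ w ∈ Metric.ball c R, 0 < (F w).re) {z : ℂ}
    (hz : z ∈ Metric.ball c R) (ht : dist z c ≤ R / 2) :
    (F c).re / 3 ≤ (F z).re := by
  have hR : 0 < R := pos_of_mem_ball hz
  have hcball : c ∈ Metric.ball c R := Metric.mem_ball_self hR
  set φ : ℂ → ℂ := fun w => (F w - F c) / (F w + (starRingEnd ℂ) (F c)) with hφdef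
  have hden : ∀ w ∈ Metric.ball c R, F w + (starRingEnd ℂ) (F c) ≠ 0 := by
    intro w hw hzero
    have : (F w + (starRingEnd ℂ) (F c)).re = 0 := by rw [hzero]; simp
    rw [Complex.add_re, Complex.conj_re] at this
    have := hpos w hw
    have := hpos c hcball
    linarith
  have hdφ : DifferentiableOn ℂ φ (Metric.ball c R) :=
    ((hd.sub_const (F c)).div (hd.add_const ((starRingEnd ℂ) (F c))) hden)
  have hφc : φ c = 0 := by simp [hφdef]
  have hmaps : Set.MapsTo φ (Metric.ball c R) (Metric.ball (φ c) 1) := by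
    intro w hw
    rw [hφc, Metric.mem_ball, dist_zero_right, hφdef]
    have hnsq : Complex.normSq (F w - F c) < Complex.normSq (F w + (starRingEnd ℂ) (F c)) := by
      simp only [Complex.normSq_apply, Complex.sub_re, Complex.sub_im, Complex.add_re,
        Complex.add_im, Complex.conj_re, Complex.conj_im]
      have h1 := hpos w hw
      have h2 := hpos c hcball
      nlinarith [sq_nonneg ((F w).im - (F c).im)]
    have habs : ‖F w - F c‖ < ‖F w + (starRingEnd ℂ) (F c)‖ := by
      rw [Complex.norm_def, Complex.norm_def]
      exact Real.sqrt_lt_sqrt (Complex.normSq_nonneg _) hnsq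
    rw [norm_div]
    rw [div_lt_one (by
      have : 0 ≤ ‖F w - F c‖ := norm_nonneg _
      linarith)]
    simpa using habs
  have hSchwarz := Complex.dist_le_div_mul_dist_of_mapsTo_ball hdφ (hmaps.mono_right Metric.ball_subset_closedBall) hz
  rw [hφc, dist_zero_right] at hSchwarz
  have hφz : ‖φ z‖ ≤ 1/2 := by
    calc ‖φ z‖ ≤ 1 / R * dist z c := hSchwarz
    _ ≤ 1 / R * (R / 2) := by
        apply mul_le_mul_of_nonneg_left ht (by positivity)
    _ = 1/2 := by field_simp
  -- unpack: |F z - F c| ≤ (1/2) |F z + conj (F c)|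
  have hnum : ‖F z - F c‖ ≤ 1/2 * ‖F z + (starRingEnd ℂ) (F c)‖ := by
    have hden' := hden z hz
    have : F z - F c = φ z * (F z + (starRingEnd ℂ) (F c)) := by
      rw [hφdef]; field_simp
    rw [this, norm_mul]
    apply mul_le_mul_of_nonneg_right _ (norm_nonneg _)
    simpa using hφz
  have hsq : Complex.normSq (F z - F c) ≤ 1/4 * Complex.normSq (F z + (starRingEnd ℂ) (F c)) := by
    have h1 := Complex.sq_norm (F z - F c)
    have h2 := Complex.sq_norm (F z + (starRingEnd ℂ) (F c))
    nlinarith [norm_nonneg (F z - F c),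
      norm_nonneg (F z + (starRingEnd ℂ) (F c))]
  have h1 := hpos z hz
  have h2 := hpos c hcball
  simp only [Complex.normSq_apply, Complex.sub_re, Complex.sub_im, Complex.add_re,
    Complex.add_im, Complex.conj_re, Complex.conj_im] at hsq
  nlinarith [sq_nonneg ((F z).im - (F c).im), sq_nonneg ((F z).re + (F c).re),
    sq_nonneg ((F z).re - (F c).re)]

/-- Harnack inequality on a ball, nonnegative version. -/
lemma harnack_ball {F : ℂ → ℂ} {c : ℂ} {R : ℝ}
    (hd : DifferentiableOn ℂ F (Metric.ball c R))
    (hpos : ∀ w ∈ Metric.ball c R, 0 ≤ (F w).re) {z : ℂ}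
    (hz : z ∈ Metric.ball c R) (ht : dist z c ≤ R / 2) :
    (F c).re / 3 ≤ (F z).re := by
  have key : ∀ ε > 0, (F c).re / 3 ≤ (F z).re + ε := by
    intro ε hε
    have hd' : DifferentiableOn ℂ (fun w => F w + (ε : ℂ)) (Metric.ball c R) :=
      hd.add_const _
    have hpos' : ∀ w ∈ Metric.ball c R, 0 < ((fun w => F w + (ε : ℂ)) w).re := by
      intro w hw
      simp only [Complex.add_re, Complex.ofReal_re]
      have := hpos w hw
      linarith
    have := harnack_ball_pos hd' hpos' hz ht
    simp only [Complex.add_re, Complex.ofReal_re] at this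
    linarith
  exact le_of_forall_pos_le_add key

lemma harmonic_const_sub {h : ℂ → ℝ} {V : Set ℂ} (hV : IsOpen V)
    (hh : HarmonicOnSet h V) (C : ℝ) : HarmonicOnSet (fun z => C - h z) V := by
  refine ⟨contDiffOn_const.sub hh.1, fun z hz => ?_⟩
  have ev1 : (fun w => fderiv ℝ (fun x => C - h x) w 1)
      =ᶠ[nhds z] (fun w => -(fderiv ℝ h w 1)) := by
    filter_upwards [hV.mem_nhds hz] with w _
    rw [fderiv_const_sub]
    simp
  have ev2 : (fun w => fderiv ℝ (fun x => C - h x) w Complex.I)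
      =ᶠ[nhds z] (fun w => -(fderiv ℝ h w Complex.I)) := by
    filter_upwards [hV.mem_nhds hz] with w _
    rw [fderiv_const_sub]
    simp
  rw [ev1.fderiv_eq, ev2.fderiv_eq, fderiv_fun_neg, fderiv_fun_neg]
  have := hh.2 z hz
  simp only [ContinuousLinearMap.neg_apply]
  linarith

lemma harmonic_const_add {h : ℂ → ℝ} {V : Set ℂ} (hV : IsOpen V)
    (hh : HarmonicOnSet h V) (C : ℝ) : HarmonicOnSet (fun z => C + h z) V := by
  refine ⟨contDiffOn_const.add hh.1, fun z hz => ?_⟩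
  have ev1 : (fun w => fderiv ℝ (fun x => C + h x) w 1)
      =ᶠ[nhds z] (fun w => fderiv ℝ h w 1) := by
    filter_upwards [hV.mem_nhds hz] with w _
    rw [fderiv_const_add]
  have ev2 : (fun w => fderiv ℝ (fun x => C + h x) w Complex.I)
      =ᶠ[nhds z] (fun w => fderiv ℝ h w Complex.I) := by
    filter_upwards [hV.mem_nhds hz] with w _
    rw [fderiv_const_add]
  rw [ev1.fderiv_eq, ev2.fderiv_eq]
  exact hh.2 z hz

lemma mem_seg {t : ℝ} (h0 : 0 ≤ t) (h1 : t ≤ 1) : ((t : ℂ)) ∈ segment ℝ (0:ℂ) 1 := by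
  refine ⟨1 - t, t, by linarith, h0, by ring, ?_⟩
  simp [Complex.real_smul]

lemma harnack_step {h : ℂ → ℝ} {V : Set ℂ} (hV : IsOpen V) (hh : HarmonicOnSet h V)
    (hnn : ∀ z ∈ V, 0 ≤ h z) {p q : ℂ} {ε : ℝ} (hε : 0 < ε)
    (hB : Metric.closedBall p ε ⊆ V) (hpq : dist q p ≤ ε / 4) :
    h p / 3 ≤ h q := by
  have hsq : ∀ z : ℂ, |z.re - p.re| < ε/2 → |z.im - p.im| < ε/2 → z ∈ V := by
    intro z h1 h2
    apply hB
    rw [Metric.mem_closedBall, Complex.dist_eq]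
    calc ‖z - p‖ ≤ |(z - p).re| + |(z - p).im| := Complex.norm_le_abs_re_add_abs_im _
    _ ≤ ε := by rw [Complex.sub_re, Complex.sub_im]; linarith
  obtain ⟨F, hFd, hFre⟩ := exists_holo hV (by linarith : (0:ℝ) < ε/2) hh hsq
  have hballV : Metric.ball p (ε/2) ⊆ V := fun w hw =>
    hB (Metric.ball_subset_closedBall (Metric.ball_subset_ball (by linarith) hw))
  have hpos : ∀ w ∈ Metric.ball p (ε/2), 0 ≤ (F w).re := by
    intro w hw
    rw [hFre w hw]
    exact hnn w (hballV hw)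
  have hqball : q ∈ Metric.ball p (ε/2) := by
    rw [Metric.mem_ball]
    linarith
  have := harnack_ball hFd hpos hqball (by linarith)
  rwa [hFre p (Metric.mem_ball_self (by linarith)), hFre q hqball] at this

lemma harnack_chain {V : Set ℂ} (hV : IsOpen V) {ε : ℝ} (hε : 0 < ε) {n : ℕ} (hn : 1 ≤ n)
    (hball : ∀ z ∈ segment ℝ (0:ℂ) 1, Metric.closedBall z ε ⊆ V)
    (hstep : (1:ℝ)/n ≤ ε/4) {h : ℂ → ℝ} (hh : HarmonicOnSet h V)
    (hnn : ∀ z ∈ V, 0 ≤ h z) :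
    ((1:ℝ)/3)^n * h 0 ≤ h 1 := by
  have hn0 : (0:ℝ) < n := by positivity
  have main : ∀ k : ℕ, k ≤ n → ((1:ℝ)/3)^k * h 0 ≤ h ((((k:ℝ)/n : ℝ)) : ℂ) := by
    intro k
    induction k with
    | zero => intro _; simp
    | succ k ih =>
      intro hk1
      have hk : k ≤ n := Nat.le_of_succ_le hk1
      have prev := ih hk
      have hkn : (k:ℝ)/n ≤ 1 := by
        rw [div_le_one hn0]
        exact_mod_cast hk
      have hmem : (((k:ℝ)/n : ℝ) : ℂ) ∈ segment ℝ (0:ℂ) 1 :=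
        mem_seg (by positivity) hkn
      have hdist : dist ((((k+1:ℕ):ℝ)/n : ℝ) : ℂ) (((k:ℝ)/n : ℝ) : ℂ) = 1/n := by
        rw [Complex.dist_eq, ← Complex.ofReal_sub, Complex.norm_real, Real.norm_eq_abs]
        push_cast
        rw [div_sub_div_same]
        rw [show ((k:ℝ) + 1 - k) = 1 by ring]
        rw [abs_of_pos (by positivity)]
      have step := harnack_step hV hh hnn hε (hball _ hmem) (by rw [hdist]; linarith)
      calc ((1:ℝ)/3)^(k+1) * h 0 = (((1:ℝ)/3)^k * h 0) / 3 := by ring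
      _ ≤ h (((k:ℝ)/n : ℝ) : ℂ) / 3 := by linarith
      _ ≤ h ((((k+1:ℕ):ℝ)/n : ℝ) : ℂ) := step
  have := main n le_rfl
  rw [div_self (ne_of_gt hn0)] at this
  simpa using this


/-- If `h` is harmonic on a connected open set `V ⊆ ℂ` containing `[0,1]`, with `|h| ≤ 1`
on `V` and `|h(0)| ≤ a` for a fixed `a < 1`, then there is `0 < λ < 1`, depending only on
`V` and `a`, such that `|h(1)| ≤ λ`. -/
theorem harnack_value_at_one (V : Set ℂ) (hV : IsOpen V) (hVc : IsConnected V)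
    (hseg : segment ℝ (0 : ℂ) 1 ⊆ V) (a : ℝ) (ha : a < 1) :
    ∃ lam : ℝ, 0 < lam ∧ lam < 1 ∧ ∀ h : ℂ → ℝ, HarmonicOnSet h V →
      (∀ z ∈ V, |h z| ≤ 1) → |h 0| ≤ a → |h 1| ≤ lam := by
  rcases lt_or_ge a 0 with hneg | hpos
  · exact ⟨1/2, by norm_num, by norm_num, fun h _ _ ha0 =>
      absurd ((abs_nonneg (h 0)).trans ha0) (not_le.2 hneg)⟩
  -- geometry: a uniform radius along the segment, and a number of steps
  obtain ⟨δ, hδpos, hδ⟩ := (isCompact_Icc.image (by fun_prop :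
      Continuous fun θ : ℝ => (1 - θ) • (0:ℂ) + θ • (1:ℂ))).exists_thickening_subset_open hV
      (by rw [← segment_eq_image ℝ (0:ℂ) 1]; exact hseg)
  have hball : ∀ z ∈ segment ℝ (0:ℂ) 1, Metric.closedBall z (δ/2) ⊆ V := by
    intro z hz w hw
    apply hδ
    rw [Metric.mem_thickening_iff]
    refine ⟨z, ?_, ?_⟩
    · rw [← segment_eq_image ℝ (0:ℂ) 1] at *; exact hz
    · rw [Metric.mem_closedBall] at hw; linarith
  set n : ℕ := ⌈(8:ℝ)/δ⌉₊ + 1 with hndef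
  have hn1 : 1 ≤ n := Nat.le_add_left 1 _
  have hnpos : (0:ℝ) < n := by positivity
  have hstep : (1:ℝ)/n ≤ (δ/2)/4 := by
    rw [div_le_div_iff₀ hnpos (by linarith)]
    have h8 : (8:ℝ)/δ ≤ n := by
      calc (8:ℝ)/δ ≤ ⌈(8:ℝ)/δ⌉₊ := Nat.le_ceil _
      _ ≤ n := by exact_mod_cast Nat.le_succ _
    calc (1:ℝ) * 4 = (8/δ) * (δ/2) := by field_simp; ring
    _ ≤ (δ/2) * (n:ℝ) := by
        rw [mul_comm (8/δ) (δ/2)]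
        exact mul_le_mul_of_nonneg_left h8 (by linarith)
  set c : ℝ := ((1:ℝ)/3)^n with hcdef
  have hc0 : 0 < c := by positivity
  have hc1 : c ≤ 1/3 := by
    calc c ≤ ((1:ℝ)/3)^1 := pow_le_pow_of_le_one (by norm_num) (by norm_num) hn1
    _ = 1/3 := pow_one _
  refine ⟨1 - c * (1 - a), ?_, ?_, ?_⟩
  · nlinarith
  · nlinarith
  intro h hh hbd ha0
  have key : ∀ u : ℂ → ℝ, HarmonicOnSet u V → (∀ z ∈ V, 0 ≤ u z) → c * u 0 ≤ u 1 :=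
    fun u hu hnn => harnack_chain hV (by linarith) hn1 hball hstep hu hnn
  have h0a : h 0 ≤ a := (le_abs_self _).trans ha0
  have h0a' : -a ≤ h 0 := (neg_le_neg ha0).trans (neg_abs_le _)
  rw [abs_le]
  constructor
  swap
  · -- upper bound via 1 - h
    have hu := key (fun z => 1 - h z) (harmonic_const_sub hV hh 1)
      (fun z hz => by have := (abs_le.1 (hbd z hz)).2; simpa using by linarith)
    have : c * (1 - a) ≤ c * (1 - h 0) := by
      apply mul_le_mul_of_nonneg_left (by linarith) (le_of_lt hc0)
    linarith
  · -- lower bound via 1 + h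
    have hu := key (fun z => 1 + h z) (harmonic_const_add hV hh 1)
      (fun z hz => by have := (abs_le.1 (hbd z hz)).1; simpa using by linarith)
    have : c * (1 - a) ≤ c * (1 + h 0) := by
      apply mul_le_mul_of_nonneg_left (by linarith) (le_of_lt hc0)
    linarith
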